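/- Fix κ ≥ 0. For every q ∈ [0,1), the integral defining B(q) = (1-q) ∫_ℝ E((κ - √q·z)/√(1-q))² φ(z) dz is finite, and the function q ↦ B(q) is continuous on [0,1). -/

import Mathlib

open MeasureTheory Real Filter

/-- The standard normal density. -/
noncomputable def gphi (u : ℝ) : ℝ := Real.exp (-u ^ 2 / 2) / Real.sqrt (2 * Real.pi)

/-- The standard normal CDF. -/
noncomputable def gPhi (u : ℝ) : ℝ := ∫ s in Set.Iic u, gphi s

/-- The standard normal tail. -/
noncomputable def gPhiBar (u : ℝ) : ℝ := 1 - gPhi u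

/-- The inverse Mills ratio. -/
noncomputable def mills (u : ℝ) : ℝ := gphi u / gPhiBar u

/-- P(r) = E[tanh²(√r Z)]. -/
noncomputable def Pfun (r : ℝ) : ℝ := ∫ z : ℝ, Real.tanh (Real.sqrt r * z) ^ 2 * gphi z

/-- B(q). -/
noncomputable def Bfun (κ q : ℝ) : ℝ :=
  (1 - q) * ∫ z : ℝ, mills ((κ - Real.sqrt q * z) / Real.sqrt (1 - q)) ^ 2 * gphi z

/-- C_κ. -/
noncomputable def Ckappa (κ : ℝ) : ℝ := ∫ z : ℝ, max (κ - z) 0 ^ 2 * gphi z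

/-- The critical capacity. -/
noncomputable def alphac (κ : ℝ) : ℝ := 2 / (Real.pi * Ckappa κ)


open Set

lemma gphi_eq : gphi = fun u => (Real.sqrt (2 * Real.pi))⁻¹ * Real.exp (-(1/2) * u ^ 2) := by
  funext u; rw [gphi, div_eq_inv_mul]; ring_nf

lemma gphi_pos (u : ℝ) : 0 < gphi u := by
  apply div_pos (Real.exp_pos _); positivity

lemma sqrt_two_pi_ge_two : (2:ℝ) ≤ Real.sqrt (2 * Real.pi) := by
  have h1 : Real.sqrt (2*Real.pi) ^ 2 = 2 * Real.pi := Real.sq_sqrt (by positivity)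
  nlinarith [Real.sqrt_nonneg (2*Real.pi), Real.pi_gt_three]

lemma gphi_le_one (u : ℝ) : gphi u ≤ 1 := by
  rw [gphi, div_le_one (by positivity)]
  calc Real.exp (-u^2/2) ≤ 1 := Real.exp_le_one_iff.2 (by nlinarith [sq_nonneg u])
    _ ≤ Real.sqrt (2*Real.pi) := le_trans (by norm_num) sqrt_two_pi_ge_two

lemma continuous_gphi : Continuous gphi := by
  unfold gphi; fun_prop

lemma integrable_gphi : Integrable gphi := by
  rw [gphi_eq]
  exact (integrable_exp_neg_mul_sq (by norm_num : (0:ℝ) < 1/2)).const_mul _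

lemma integral_gphi : ∫ u, gphi u = 1 := by
  rw [gphi_eq]
  rw [integral_const_mul, integral_gaussian]
  rw [← Real.sqrt_inv, ← Real.sqrt_mul (by positivity)]
  rw [show (2 * Real.pi)⁻¹ * (Real.pi / (1/2)) = 1 by field_simp]
  exact Real.sqrt_one

lemma gPhiBar_eq (u : ℝ) : gPhiBar u = ∫ s in Set.Ioi u, gphi s := by
  rw [gPhiBar, eq_comm, eq_sub_iff_add_eq, add_comm, gPhi,
    intervalIntegral.integral_Iic_add_Ioi integrable_gphi.integrableOn
      integrable_gphi.integrableOn, integral_gphi]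

lemma gPhiBar_pos (u : ℝ) : 0 < gPhiBar u := by
  rw [gPhiBar_eq]
  apply (setIntegral_pos_iff_support_of_nonneg_ae
    (Eventually.of_forall (fun x => (gphi_pos x).le)) integrable_gphi.integrableOn).2
  have h : Function.support gphi ∩ Ioi u = Ioi u := by
    ext x; simp [Function.mem_support, (gphi_pos x).ne']
  rw [h, Real.volume_Ioi]
  exact ENNReal.zero_lt_top

lemma continuous_gPhi : Continuous gPhi := by
  have h : gPhi = fun u => gPhi 0 + ∫ s in (0:ℝ)..u, gphi s := by
    funext u
    rw [← intervalIntegral.integral_Iic_sub_Iic integrable_gphi.integrableOn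
      integrable_gphi.integrableOn]
    simp [gPhi]
  rw [h]
  exact continuous_const.add (integrable_gphi.continuous_primitive 0)

lemma continuous_mills : Continuous mills := by
  unfold mills gPhiBar
  exact continuous_gphi.div (continuous_const.sub continuous_gPhi)
    (fun u => (gPhiBar_pos u).ne')

lemma mills_nonneg (u : ℝ) : 0 ≤ mills u :=
  div_nonneg (gphi_pos u).le (gPhiBar_pos u).le

lemma gphi_antitone {s t : ℝ} (hs : 0 ≤ s) (hst : s ≤ t) : gphi t ≤ gphi s := by
  unfold gphi
  apply div_le_div_of_nonneg_right ?_ (by positivity)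
  · apply Real.exp_le_exp.2; nlinarith

lemma gPhiBar_ge {u ε : ℝ} (hu : 0 ≤ u) (hε : 0 < ε) :
    ε * gphi (u + ε) ≤ gPhiBar u := by
  rw [gPhiBar_eq]
  have h1 : ∫ s in Set.Ioc u (u+ε), gphi s ≤ ∫ s in Set.Ioi u, gphi s :=
    setIntegral_mono_set integrable_gphi.integrableOn
      (Eventually.of_forall fun x => (gphi_pos x).le)
      (HasSubset.Subset.eventuallyLE Ioc_subset_Ioi_self)
  refine le_trans ?_ h1
  have h2 : ∫ s in Set.Ioc u (u+ε), gphi (u+ε) ≤ ∫ s in Set.Ioc u (u+ε), gphi s := by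
    apply setIntegral_mono_on
      (integrableOn_const (by simp [Real.volume_Ioc]))
      integrable_gphi.integrableOn measurableSet_Ioc
    intro x hx
    exact gphi_antitone (le_of_lt (lt_of_le_of_lt hu hx.1)) hx.2
  refine le_trans ?_ h2
  rw [setIntegral_const, measureReal_def, Real.volume_Ioc, smul_eq_mul]
  rw [show u + ε - u = ε by ring, ENNReal.toReal_ofReal hε.le]

lemma sqrt_two_pi_le_three : Real.sqrt (2 * Real.pi) ≤ 3 := by
  rw [show (3:ℝ) = Real.sqrt 9 by rw [show (9:ℝ) = 3^2 by norm_num, Real.sqrt_sq]; norm_num]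
  apply Real.sqrt_le_sqrt
  nlinarith [Real.pi_le_four]

lemma gphi_ratio (u v : ℝ) : gphi u / gphi v = Real.exp ((v^2 - u^2)/2) := by
  have hs : Real.sqrt (2 * Real.pi) ≠ 0 := by positivity
  rw [gphi, gphi, div_div_div_comm, div_self hs, div_one, ← Real.exp_sub]
  ring_nf

lemma mills_le (u : ℝ) : mills u ≤ 3 * Real.exp (3/2) * (1 + |u|) := by
  rcases le_or_gt 0 u with hu | hu
  · set ε : ℝ := 1/(1+u) with hε
    have hu1 : (0:ℝ) < 1 + u := by linarith
    have hε0 : 0 < ε := by positivity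
    have hεle : ε ≤ 1 := by rw [hε, div_le_one hu1]; linarith
    have hb := gPhiBar_ge hu hε0
    have hgp : 0 < ε * gphi (u + ε) := mul_pos hε0 (gphi_pos _)
    have h1 : mills u ≤ gphi u / (ε * gphi (u + ε)) :=
      div_le_div_of_nonneg_left (gphi_pos u).le hgp hb
    have h2 : gphi u / (ε * gphi (u + ε)) = (1 + u) * Real.exp (u * ε + ε^2/2) := by
      rw [div_mul_eq_div_div_swap, gphi_ratio, hε, div_div_eq_mul_div, div_one, mul_comm]
      congr 1
      field_simp
      ring
    have h3 : Real.exp (u * ε + ε^2/2) ≤ Real.exp (3/2) := by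
      apply Real.exp_le_exp.2
      have huε : u * ε ≤ 1 := by rw [hε]; rw [mul_one_div, div_le_one hu1]; linarith
      nlinarith
    calc mills u ≤ (1 + u) * Real.exp (u * ε + ε^2/2) := by rw [← h2]; exact h1
      _ ≤ (1 + u) * Real.exp (3/2) := by
          apply mul_le_mul_of_nonneg_left h3 (by linarith)
      _ ≤ 3 * Real.exp (3/2) * (1 + |u|) := by
          rw [abs_of_nonneg hu]
          nlinarith [Real.exp_pos (3/2:ℝ)]
  · have h0 : (1:ℝ) * gphi (0 + 1) ≤ gPhiBar 0 := gPhiBar_ge le_rfl one_pos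
    rw [one_mul, zero_add] at h0
    have hmono : gPhiBar 0 ≤ gPhiBar u := by
      rw [gPhiBar_eq, gPhiBar_eq]
      exact setIntegral_mono_set integrable_gphi.integrableOn
        (Eventually.of_forall fun x => (gphi_pos x).le)
        (HasSubset.Subset.eventuallyLE (Ioi_subset_Ioi hu.le))
    have h1 : mills u ≤ 1 / gphi 1 :=
      div_le_div₀ (by norm_num) (gphi_le_one u) (gphi_pos 1) (le_trans h0 hmono)
    have h2 : 1 / gphi 1 = Real.sqrt (2*Real.pi) * Real.exp (1/2) := by
      rw [gphi, one_div, inv_div, div_eq_mul_inv, ← Real.exp_neg]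
      norm_num
    calc mills u ≤ 1 / gphi 1 := h1
      _ = Real.sqrt (2*Real.pi) * Real.exp (1/2) := h2
      _ ≤ 3 * Real.exp (3/2) := by
          apply mul_le_mul sqrt_two_pi_le_three (Real.exp_le_exp.2 (by norm_num))
            (Real.exp_pos _).le (by norm_num)
      _ ≤ 3 * Real.exp (3/2) * (1 + |u|) := by
          nlinarith [Real.exp_pos (3/2:ℝ), abs_nonneg u]

lemma integrable_id_gphi : Integrable (fun z => z * gphi z) := by
  rw [gphi_eq]
  have := (integrable_mul_exp_neg_mul_sq (by norm_num : (0:ℝ) < 1/2)).const_mul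
    ((Real.sqrt (2 * Real.pi))⁻¹)
  apply this.congr
  filter_upwards with z; ring

lemma integrable_abs_gphi : Integrable (fun z => |z| * gphi z) := by
  have := integrable_id_gphi.abs
  apply this.congr
  filter_upwards with z
  rw [abs_mul, abs_of_pos (gphi_pos z)]

lemma integrable_sq_gphi : Integrable (fun z => z^2 * gphi z) := by
  rw [gphi_eq]
  have := (integrable_rpow_mul_exp_neg_mul_sq (by norm_num : (0:ℝ) < 1/2)
    (by norm_num : (-1:ℝ) < 2)).const_mul ((Real.sqrt (2 * Real.pi))⁻¹)
  apply this.congr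
  filter_upwards with z
  rw [show ((2:ℝ)) = ((2:ℕ):ℝ) by norm_num, Real.rpow_natCast]
  ring

lemma integrable_poly_gphi (A B : ℝ) : Integrable (fun z => (A + B*|z|)^2 * gphi z) := by
  have h : (fun z => (A + B*|z|)^2 * gphi z) =
      fun z => A^2 * gphi z + (2*A*B) * (|z| * gphi z) + B^2 * (z^2 * gphi z) := by
    funext z
    rw [← sq_abs z]; ring
  rw [h]
  exact ((integrable_gphi.const_mul _).add (integrable_abs_gphi.const_mul _)).add
    (integrable_sq_gphi.const_mul _)

lemma mills_sq_bound {v : ℝ} {C D z : ℝ} (hv : |v| ≤ C + D * |z|) :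
    mills v ^ 2 * gphi z ≤
      ((3 * Real.exp (3/2)) * (1 + C) + (3 * Real.exp (3/2) * D) * |z|) ^ 2 * gphi z := by
  have hM : (0:ℝ) < 3 * Real.exp (3/2) := by positivity
  have h1 : mills v ≤ 3 * Real.exp (3/2) * (1 + (C + D * |z|)) := by
    refine le_trans (mills_le v) ?_
    apply mul_le_mul_of_nonneg_left _ hM.le
    linarith
  have h2 : (3 * Real.exp (3/2)) * (1 + (C + D*|z|)) =
      (3 * Real.exp (3/2)) * (1 + C) + (3 * Real.exp (3/2) * D) * |z| := by ring
  apply mul_le_mul_of_nonneg_right _ (gphi_pos z).le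
  rw [← h2]
  exact pow_le_pow_left₀ (mills_nonneg v) (h2 ▸ (h2.symm ▸ h1)) 2


theorem stmt_7 (κ : ℝ) (hκ : 0 ≤ κ) :
    (∀ q ∈ Set.Ico (0 : ℝ) 1,
      MeasureTheory.Integrable
        (fun z : ℝ => mills ((κ - Real.sqrt q * z) / Real.sqrt (1 - q)) ^ 2 * gphi z)) ∧
    ContinuousOn (Bfun κ) (Set.Ico (0 : ℝ) 1) := by
  have hM : (0:ℝ) < 3 * Real.exp (3/2) := by positivity
  have harg : ∀ q z : ℝ, q ∈ Set.Ico (0:ℝ) 1 → ∀ b, q ≤ b → b < 1 →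
      |(κ - Real.sqrt q * z) / Real.sqrt (1 - q)| ≤
        κ / Real.sqrt (1-b) + (1 / Real.sqrt (1-b)) * |z| := by
    intro q z hq b hqb hb
    have h1b : (0:ℝ) < 1 - b := by linarith
    have h1q : (0:ℝ) < 1 - q := by linarith [hq.2]
    have hs : Real.sqrt (1-b) ≤ Real.sqrt (1-q) := Real.sqrt_le_sqrt (by linarith)
    have hsb : (0:ℝ) < Real.sqrt (1-b) := Real.sqrt_pos.2 h1b
    have hsq : (0:ℝ) < Real.sqrt (1-q) := Real.sqrt_pos.2 h1q
    rw [abs_div, abs_of_pos hsq]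
    have hnum : |κ - Real.sqrt q * z| ≤ κ + |z| := by
      refine le_trans (abs_sub _ _) ?_
      have h1 : |κ| = κ := abs_of_nonneg hκ
      have h2 : |Real.sqrt q * z| ≤ |z| := by
        rw [abs_mul, abs_of_nonneg (Real.sqrt_nonneg q)]
        have : Real.sqrt q ≤ 1 := by
          rw [show (1:ℝ) = Real.sqrt 1 by simp]
          exact Real.sqrt_le_sqrt hq.2.le
        nlinarith [abs_nonneg z]
      linarith
    calc |κ - Real.sqrt q * z| / Real.sqrt (1-q) ≤ (κ + |z|) / Real.sqrt (1-q) :=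
          div_le_div_of_nonneg_right hnum hsq.le
      _ ≤ (κ + |z|) / Real.sqrt (1-b) := by
          apply div_le_div_of_nonneg_left (by positivity) hsb hs
      _ = κ / Real.sqrt (1-b) + (1 / Real.sqrt (1-b)) * |z| := by ring
  have hcontz : ∀ q : ℝ, Continuous
      (fun z : ℝ => mills ((κ - Real.sqrt q * z) / Real.sqrt (1 - q)) ^ 2 * gphi z) := by
    intro q
    exact ((continuous_mills.comp
      (((continuous_const.sub (continuous_const.mul continuous_id)).div_const _))).pow 2).mul
      continuous_gphi
  have hbd : ∀ q ∈ Set.Ico (0:ℝ) 1, ∀ b, q ≤ b → b < 1 → ∀ z : ℝ,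
      ‖mills ((κ - Real.sqrt q * z) / Real.sqrt (1 - q)) ^ 2 * gphi z‖ ≤
      ((3 * Real.exp (3/2)) * (1 + κ / Real.sqrt (1-b)) +
        (3 * Real.exp (3/2) * (1 / Real.sqrt (1-b))) * |z|) ^ 2 * gphi z := by
    intro q hq b hqb hb z
    rw [Real.norm_eq_abs, abs_of_nonneg (mul_nonneg (sq_nonneg _) (gphi_pos z).le)]
    exact mills_sq_bound (harg q z hq b hqb hb)
  have hint : ∀ q ∈ Set.Ico (0 : ℝ) 1,
      MeasureTheory.Integrable
        (fun z : ℝ => mills ((κ - Real.sqrt q * z) / Real.sqrt (1 - q)) ^ 2 * gphi z) := by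
    intro q hq
    apply Integrable.mono' (integrable_poly_gphi _ _) (hcontz q).aestronglyMeasurable
    filter_upwards with z
    exact hbd q hq q le_rfl hq.2 z
  refine ⟨hint, ?_⟩
  unfold Bfun
  apply ContinuousOn.mul (Continuous.continuousOn (by fun_prop))
  intro q₀ hq₀
  set b : ℝ := (1 + q₀)/2 with hbdef
  have hq₀b : q₀ < b := by rw [hbdef]; linarith [hq₀.2]
  have hb1 : b < 1 := by rw [hbdef]; linarith [hq₀.2]
  apply continuousWithinAt_of_dominated
    (bound := fun z => ((3 * Real.exp (3/2)) * (1 + κ / Real.sqrt (1-b)) +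
        (3 * Real.exp (3/2) * (1 / Real.sqrt (1-b))) * |z|) ^ 2 * gphi z)
  · exact Eventually.of_forall fun q => (hcontz q).aestronglyMeasurable
  · have h1 : ∀ᶠ q in nhdsWithin q₀ (Set.Ico (0:ℝ) 1), q ∈ Set.Iio b :=
      eventually_nhdsWithin_of_eventually_nhds
        (eventually_of_mem (Iio_mem_nhds hq₀b) fun _ hx => hx)
    filter_upwards [h1, eventually_mem_nhdsWithin] with q hq1 hq2
    exact Eventually.of_forall fun z => hbd q hq2 b hq1.le hb1 z
  · exact integrable_poly_gphi _ _
  · apply Eventually.of_forall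
    intro z
    apply ContinuousAt.continuousWithinAt
    have hden : Real.sqrt (1 - q₀) ≠ 0 := by
      refine (Real.sqrt_pos.2 ?_).ne'
      linarith [hq₀.2]
    have harg2 : ContinuousAt (fun q : ℝ => (κ - Real.sqrt q * z) / Real.sqrt (1 - q)) q₀ := by
      apply ContinuousAt.div
      · fun_prop
      · fun_prop
      · exact hden
    exact ((continuous_mills.continuousAt.comp harg2).pow 2).mul continuousAt_const
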